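/- Let δ be a fully labeled n-simplex with vertices x^0, …, x^n where x^i is labeled i, let τ > 0, and let f be the affine extension of f(x^i)_j = x^i_j − τ if j = i, x^i_j + τ/n otherwise. If (z_m) and (z'_m) are sequences in δ with |f(z_m) − z_m| → 0 and |f(z'_m) − z'_m| → 0, writing z_m = Σ λ(m)_i x^i and z'_m = Σ λ'(m)_i x^i in barycentric coordinates, then λ(m)_i → 1/(n+1) and λ'(m)_i → 1/(n+1) for all i, and hence |z_m − z'_m| → 0. -/

import Mathlib

open Filter Topology

lemma coord_le_norm {k : ℕ} (v : EuclideanSpace ℝ (Fin k)) (i : Fin k) : |v i| ≤ ‖v‖ := by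
  rw [EuclideanSpace.norm_eq]
  have h1 : |v i| = Real.sqrt (‖v i‖ ^ 2) := by
    rw [Real.sqrt_sq (norm_nonneg _), Real.norm_eq_abs]
  rw [h1]
  exact Real.sqrt_le_sqrt (Finset.single_le_sum (fun j _ => sq_nonneg ‖v j‖) (Finset.mem_univ i))

lemma piLp_sum_apply {k : ℕ} {ι : Type*} (s : Finset ι)
    (f : ι → EuclideanSpace ℝ (Fin k)) (j : Fin k) :
    (∑ i ∈ s, f i) j = ∑ i ∈ s, f i j := by
  induction s using Finset.cons_induction with
  | empty => rfl
  | cons a s ha ih => rw [Finset.sum_cons, Finset.sum_cons, PiLp.add_apply, ih]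

lemma aux_tendsto (n : ℕ) (hn : 0 < n)
    (x : Fin (n + 1) → EuclideanSpace ℝ (Fin (n + 1)))
    (τ : ℝ) (hτ : 0 < τ)
    (F : Fin (n + 1) → EuclideanSpace ℝ (Fin (n + 1)))
    (hF : ∀ k, F k = fun j => if j = k then x k j - τ else x k j + τ / n)
    (lam : ℕ → Fin (n + 1) → ℝ)
    (hlam1 : ∀ m, ∑ i, lam m i = 1)
    (z : ℕ → EuclideanSpace ℝ (Fin (n + 1)))
    (hz : ∀ m, z m = ∑ i, lam m i • x i)
    (h1 : Tendsto (fun m => dist (∑ i, lam m i • F i) (z m)) atTop (𝓝 0)) :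
    ∀ i, Tendsto (fun m => lam m i) atTop (𝓝 (1 / (n + 1 : ℝ))) := by
  have hn0 : (n : ℝ) ≠ 0 := Nat.cast_ne_zero.mpr hn.ne'
  have hn1 : (n : ℝ) + 1 ≠ 0 := by positivity
  intro j
  have hcoord : ∀ m, (∑ i, lam m i • F i) j - z m j
      = τ / n - lam m j * (τ * (n + 1) / n) := by
    intro m
    have hs : (∑ i, lam m i • F i) j = ∑ i, lam m i * F i j := by
      rw [piLp_sum_apply]; simp [PiLp.smul_apply]
    have hs' : z m j = ∑ i, lam m i * x i j := by
      rw [hz, piLp_sum_apply]; simp [PiLp.smul_apply]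
    rw [hs, hs', ← Finset.sum_sub_distrib]
    have hterm : ∀ i : Fin (n + 1), lam m i * F i j - lam m i * x i j
        = lam m i * (τ / n) + (if j = i then lam m i * (-τ - τ / n) else 0) := by
      intro i
      simp only [hF]
      by_cases h : j = i
      · rw [if_pos h, if_pos h]; ring
      · rw [if_neg h, if_neg h]; ring
    rw [Finset.sum_congr rfl fun i _ => hterm i, Finset.sum_add_distrib,
      ← Finset.sum_mul, hlam1 m, Finset.sum_ite_eq]
    simp only [Finset.mem_univ, if_pos]
    field_simp
    ring
  have hbound : ∀ m, ‖τ / n - lam m j * (τ * (n + 1) / n)‖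
      ≤ dist (∑ i, lam m i • F i) (z m) := by
    intro m
    rw [Real.norm_eq_abs, ← hcoord m, dist_eq_norm]
    have := coord_le_norm ((∑ i, lam m i • F i) - z m) j
    rwa [PiLp.sub_apply] at this
  have e0 : Tendsto (fun m => τ / n - lam m j * (τ * (n + 1) / n)) atTop (𝓝 0) :=
    squeeze_zero_norm hbound h1
  have e1 : Tendsto (fun m => (τ / n - (τ / n - lam m j * (τ * (n + 1) / n)))
      / (τ * (n + 1) / n)) atTop (𝓝 ((τ / n - 0) / (τ * (n + 1) / n))) :=
    (tendsto_const_nhds.sub e0).div_const _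
  have heq : (fun m => (τ / n - (τ / n - lam m j * (τ * (n + 1) / n)))
      / (τ * (n + 1) / n)) = fun m => lam m j := by
    funext m
    have hC : τ * (n + 1) / n ≠ 0 := by positivity
    field_simp
    ring
  have hlim : (τ / n - 0) / (τ * (n + 1) / n) = 1 / (n + 1 : ℝ) := by
    field_simp
    ring
  rw [heq, hlim] at e1
  exact e1

theorem stmt_8 (n : ℕ) (hn : 0 < n)
    (x : Fin (n + 1) → EuclideanSpace ℝ (Fin (n + 1)))
    (hind : AffineIndependent ℝ x)
    (τ : ℝ) (hτ : 0 < τ)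
    (F : Fin (n + 1) → EuclideanSpace ℝ (Fin (n + 1)))
    (hF : ∀ k, F k = fun j => if j = k then x k j - τ else x k j + τ / n)
    (lam lam' : ℕ → Fin (n + 1) → ℝ)
    (hlam : ∀ m i, 0 ≤ lam m i) (hlam1 : ∀ m, ∑ i, lam m i = 1)
    (hlam' : ∀ m i, 0 ≤ lam' m i) (hlam1' : ∀ m, ∑ i, lam' m i = 1)
    (z z' : ℕ → EuclideanSpace ℝ (Fin (n + 1)))
    (hz : ∀ m, z m = ∑ i, lam m i • x i)
    (hz' : ∀ m, z' m = ∑ i, lam' m i • x i)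
    (h1 : Tendsto (fun m => dist (∑ i, lam m i • F i) (z m)) atTop (𝓝 0))
    (h2 : Tendsto (fun m => dist (∑ i, lam' m i • F i) (z' m)) atTop (𝓝 0)) :
    (∀ i, Tendsto (fun m => lam m i) atTop (𝓝 (1 / (n + 1 : ℝ)))) ∧
    (∀ i, Tendsto (fun m => lam' m i) atTop (𝓝 (1 / (n + 1 : ℝ)))) ∧
    Tendsto (fun m => dist (z m) (z' m)) atTop (𝓝 0) := by
  have hA := aux_tendsto n hn x τ hτ F hF lam hlam1 z hz h1
  have hB := aux_tendsto n hn x τ hτ F hF lam' hlam1' z' hz' h2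
  refine ⟨hA, hB, ?_⟩
  set c : EuclideanSpace ℝ (Fin (n + 1)) := ∑ i, (1 / (n + 1 : ℝ)) • x i with hc
  have hzc : Tendsto z atTop (𝓝 c) := by
    have : Tendsto (fun m => ∑ i, lam m i • x i) atTop (𝓝 c) := by
      rw [hc]
      exact tendsto_finset_sum _ fun i _ => (hA i).smul_const (x i)
    exact this.congr fun m => (hz m).symm
  have hzc' : Tendsto z' atTop (𝓝 c) := by
    have : Tendsto (fun m => ∑ i, lam' m i • x i) atTop (𝓝 c) := by
      rw [hc]
      exact tendsto_finset_sum _ fun i _ => (hB i).smul_const (x i)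
    exact this.congr fun m => (hz' m).symm
  have := hzc.dist hzc'
  simpa using this
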